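/- Let G=(V,E) be a finite connected graph, f_v : ℝ → ℝ convex for each v ∈ V, F(x) = Σ_v f_v(x(v)) for x ∈ ℝ^V, and λ > 0. For x* ∈ ℝ, the following are equivalent: (1) x*·1_V minimizes F(x) + λ‖x‖_TV over ℝ^V; (2) there exists u ∈ ∂F(x*·1_V) with ‖u‖_* ≤ λ; (3) there exists u with u(v) ∈ ∂f_v(x*) for all v, Σ_v u(v) = 0, and Σ_{v∈A} u(v) ≤ λ·per(A) for every A ⊆ V. Moreover each of these implies that x* minimizes Σ_v f_v over ℝ. -/

import Mathlib

set_option linter.unusedSectionVars false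
set_option maxHeartbeats 1000000


open Finset

noncomputable section

/-- Discrete total variation. -/
def tvNorm {V : Type*} [Fintype V] (G : SimpleGraph V) [DecidableRel G.Adj]
    (x : V → ℝ) : ℝ :=
  (1 / 2) * ∑ v, ∑ w, if G.Adj v w then |x w - x v| else 0

/-- Perimeter of a subset of vertices. -/
def perim {V : Type*} [Fintype V] [DecidableEq V] (G : SimpleGraph V)
    [DecidableRel G.Adj] (A : Finset V) : ℝ :=
  tvNorm G (fun v => if v ∈ A then 1 else 0)

/-- Dual norm of the TV norm on the zero-mean subspace. -/
def dualNorm {V : Type*} [Fintype V] (G : SimpleGraph V) [DecidableRel G.Adj]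
    (u : V → ℝ) : ℝ :=
  sSup {r | ∃ x : V → ℝ, (∑ v, x v = 0) ∧ tvNorm G x ≤ 1 ∧ r = ∑ v, x v * u v}

/-- `g` is a subgradient of `f : ℝ → ℝ` at `x`. -/
def IsSubgradientAt (f : ℝ → ℝ) (x g : ℝ) : Prop :=
  ∀ y : ℝ, f x + g * (y - x) ≤ f y

section TVLemmas

variable {V : Type*} [Fintype V] [DecidableEq V] (G : SimpleGraph V) [DecidableRel G.Adj]

lemma tv_nonneg (x : V → ℝ) : 0 ≤ tvNorm G x := by
  rw [tvNorm]
  apply mul_nonneg (by norm_num)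
  apply Finset.sum_nonneg; intro v _
  apply Finset.sum_nonneg; intro w _
  split
  · exact abs_nonneg _
  · exact le_rfl

lemma tv_congr (x y : V → ℝ) (hxy : ∀ v w, |x w - x v| = |y w - y v|) :
    tvNorm G x = tvNorm G y := by
  rw [tvNorm, tvNorm]
  congr 1
  apply Finset.sum_congr rfl; intro v _
  apply Finset.sum_congr rfl; intro w _
  by_cases h : G.Adj v w <;> simp [h, hxy]

lemma tv_const (c : ℝ) : tvNorm G (fun _ => c) = 0 := by simp [tvNorm]

lemma tv_neg (x : V → ℝ) : tvNorm G (fun v => -x v) = tvNorm G x :=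
  tv_congr G _ _ fun v w => by rw [neg_sub_neg, abs_sub_comm]

lemma tv_add_const (x : V → ℝ) (c : ℝ) :
    tvNorm G (fun v => x v + c) = tvNorm G x :=
  tv_congr G _ _ fun v w => by rw [add_sub_add_right_eq_sub]

lemma tv_smul (x : V → ℝ) (c : ℝ) (hc : 0 ≤ c) :
    tvNorm G (fun v => c * x v) = c * tvNorm G x := by
  rw [tvNorm, tvNorm]
  have key : ∀ v w, (if G.Adj v w then |c * x w - c * x v| else 0)
      = c * (if G.Adj v w then |x w - x v| else 0) := by
    intro v w; split
    · rw [← mul_sub, abs_mul, abs_of_nonneg hc]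
    · ring
  simp only [key, ← Finset.mul_sum]
  ring

lemma tv_sublinear (x y : V → ℝ) (a b : ℝ) (ha : 0 ≤ a) (hb : 0 ≤ b) :
    tvNorm G (fun v => a * x v + b * y v) ≤ a * tvNorm G x + b * tvNorm G y := by
  rw [tvNorm, tvNorm, tvNorm]
  have key : ∀ v w, (if G.Adj v w then |(a * x w + b * y w) - (a * x v + b * y v)| else 0)
      ≤ a * (if G.Adj v w then |x w - x v| else 0)
        + b * (if G.Adj v w then |y w - y v| else 0) := by
    intro v w; split
    · have h1 : (a * x w + b * y w) - (a * x v + b * y v)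
          = a * (x w - x v) + b * (y w - y v) := by ring
      rw [h1]
      calc |a * (x w - x v) + b * (y w - y v)|
          ≤ |a * (x w - x v)| + |b * (y w - y v)| := abs_add_le _ _
        _ = a * |x w - x v| + b * |y w - y v| := by
            rw [abs_mul, abs_mul, abs_of_nonneg ha, abs_of_nonneg hb]
    · simp
  have h2 : ∑ v, ∑ w, (if G.Adj v w then |(a * x w + b * y w) - (a * x v + b * y v)| else 0)
      ≤ ∑ v, ∑ w, (a * (if G.Adj v w then |x w - x v| else 0)
        + b * (if G.Adj v w then |y w - y v| else 0)) := by
    apply Finset.sum_le_sum; intro v _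
    apply Finset.sum_le_sum; intro w _
    exact key v w
  simp only [Finset.sum_add_distrib, ← Finset.mul_sum] at h2
  linarith

lemma sum_ind_mul (A : Finset V) (u : V → ℝ) :
    ∑ v, (if v ∈ A then (1:ℝ) else 0) * u v = ∑ v ∈ A, u v := by
  have : ∀ v, (if v ∈ A then (1:ℝ) else 0) * u v = if v ∈ A then u v else 0 := by
    intro v; split <;> simp
  simp only [this]
  rw [Finset.sum_ite_mem, Finset.univ_inter]

lemma perim_nonneg (A : Finset V) : 0 ≤ perim G A := tv_nonneg G _

lemma perim_empty : perim G (∅ : Finset V) = 0 := by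
  simp [perim, tvNorm]

lemma perim_univ : perim G (univ : Finset V) = 0 := by
  simp [perim, tvNorm]

end TVLemmas

section Main

variable {V : Type*} [Fintype V] [DecidableEq V] (G : SimpleGraph V) [DecidableRel G.Adj]

/-- Connectivity gives a crossing edge, hence perimeter at least 1/2. -/
lemma perim_ge_half (hG : G.Connected) (A : Finset V) (hA : A.Nonempty) (hA2 : A ≠ univ) :
    1 / 2 ≤ perim G A := by
  obtain ⟨a, ha⟩ := hA
  obtain ⟨b, hb⟩ : ∃ b, b ∉ A := by
    by_contra h
    push_neg at h
    exact hA2 (Finset.eq_univ_iff_forall.2 h)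
  -- find a crossing edge
  have key : ∀ (a b : V), G.Walk a b → a ∈ A → b ∉ A →
      ∃ v w, G.Adj v w ∧ v ∈ A ∧ w ∉ A := by
    intro a b p
    induction p with
    | nil => exact fun h1 h2 => absurd h1 h2
    | @cons a c b hadj p ih =>
      intro h1 h2
      by_cases hc : c ∈ A
      · exact ih hc h2
      · exact ⟨a, c, hadj, h1, hc⟩
  obtain ⟨v0, w0, hadj, hv0, hw0⟩ := key a b (hG.preconnected a b).some ha hb
  rw [perim, tvNorm]
  set t : V → V → ℝ := fun v w =>
    if G.Adj v w then |(if w ∈ A then (1:ℝ) else 0) - (if v ∈ A then (1:ℝ) else 0)| else 0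
    with ht
  have htnn : ∀ v w, 0 ≤ t v w := by
    intro v w; rw [ht]; dsimp only; split
    · exact abs_nonneg _
    · exact le_rfl
  have h1 : (1:ℝ) ≤ ∑ w, t v0 w := by
    have h2 : t v0 w0 = 1 := by
      rw [ht]; dsimp only
      rw [if_pos hadj, if_neg hw0, if_pos hv0]
      norm_num
    calc (1:ℝ) = t v0 w0 := h2.symm
      _ ≤ ∑ w, t v0 w := Finset.single_le_sum (fun w _ => htnn v0 w) (mem_univ w0)
  have h3 : (1:ℝ) ≤ ∑ v, ∑ w, t v w := by
    calc (1:ℝ) ≤ ∑ w, t v0 w := h1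
      _ ≤ ∑ v, ∑ w, t v w :=
        Finset.single_le_sum (fun v _ => Finset.sum_nonneg fun w _ => htnn v w) (mem_univ v0)
  have : ∑ v, ∑ w, (if G.Adj v w then |(if w ∈ A then (1:ℝ) else 0) - (if v ∈ A then (1:ℝ) else 0)| else 0) = ∑ v, ∑ w, t v w := rfl
  rw [this]
  linarith

/-- Layer-cake estimate: if `u` is zero-mean and satisfies the perimeter bounds with
constant `μ`, then `⟨x, u⟩ ≤ μ · tv(x)` for every `x`. -/
lemma layer_cake (u : V → ℝ) (μ : ℝ) (hsum : ∑ v, u v = 0)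
    (hper : ∀ A : Finset V, ∑ v ∈ A, u v ≤ μ * perim G A) :
    ∀ (n : ℕ) (x : V → ℝ), (Finset.image x Finset.univ).card ≤ n →
      ∑ v, x v * u v ≤ μ * tvNorm G x := by
  intro n
  induction n with
  | zero =>
    intro x hx
    have h0 : (Finset.image x Finset.univ).card = 0 := Nat.le_zero.1 hx
    have h1 : (Finset.univ : Finset V) = ∅ := by
      by_contra h
      obtain ⟨v, hv⟩ := Finset.nonempty_iff_ne_empty.2 h
      have : x v ∈ Finset.image x Finset.univ := Finset.mem_image_of_mem x hv
      rw [Finset.card_eq_zero.1 h0] at this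
      exact absurd this (Finset.notMem_empty _)
    rw [tvNorm]
    simp [h1]
  | succ n ih =>
    intro x hx
    by_cases hc : ∀ v w : V, x v = x w
    · -- constant case
      have htv : tvNorm G x = 0 := by
        rw [tvNorm]
        have : ∀ v w : V, (if G.Adj v w then |x w - x v| else 0) = 0 := by
          intro v w; split
          · rw [hc w v, sub_self, abs_zero]
          · rfl
        simp [this]
      have hs : ∑ v, x v * u v = 0 := by
        rcases isEmpty_or_nonempty V with h | h
        · simp
        · obtain ⟨v0⟩ := h
          calc ∑ v, x v * u v = ∑ v, x v0 * u v :=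
                Finset.sum_congr rfl fun v _ => by rw [hc v v0]
            _ = x v0 * ∑ v, u v := by rw [Finset.mul_sum]
            _ = 0 := by rw [hsum, mul_zero]
      rw [hs, htv, mul_zero]
    · push_neg at hc
      obtain ⟨v1, w1, hvw⟩ := hc
      obtain ⟨vm, -, hvm⟩ := Finset.exists_min_image Finset.univ x ⟨v1, mem_univ v1⟩
      set m := x vm with hm
      set A : Finset V := Finset.univ.filter (fun v => m < x v) with hA
      have hmemA : ∀ v, v ∈ A ↔ m < x v := by intro v; simp [hA]
      have hAne : A.Nonempty := by
        rcases (hvm v1 (mem_univ v1)).lt_or_eq with h | h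
        · exact ⟨v1, (hmemA v1).2 h⟩
        · refine ⟨w1, (hmemA w1).2 ?_⟩
          have h2 := hvm w1 (mem_univ w1)
          have h3 : m ≠ x w1 := by rw [h]; exact hvw
          exact lt_of_le_of_ne h2 h3
      obtain ⟨vp, hvpA, hvp⟩ := Finset.exists_min_image A x hAne
      set t := x vp - m with htdef
      have htpos : 0 < t := by
        have := (hmemA vp).1 hvpA
        rw [htdef]; linarith
      set ψ : ℝ → ℝ := fun s => if m < s then s - t else s with hψ
      set x' := fun v => ψ (x v) with hx'
      have hxm : ∀ v, ¬ m < x v → x v = m := fun v h =>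
        le_antisymm (not_lt.1 h) (hvm v (mem_univ v))
      have hxp : ∀ v, m < x v → x vp ≤ x v := fun v h => hvp v ((hmemA v).2 h)
      -- values of x'
      have hx'in : ∀ v, v ∈ A → x' v = x v - t := by
        intro v hv; rw [hx']; dsimp only; rw [hψ]; dsimp only
        rw [if_pos ((hmemA v).1 hv)]
      have hx'out : ∀ v, v ∉ A → x' v = m := by
        intro v hv
        have h2 : ¬ m < x v := fun h => hv ((hmemA v).2 h)
        rw [hx']; dsimp only; rw [hψ]; dsimp only
        rw [if_neg h2]; exact hxm v h2
      -- edge identity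
      have eid : ∀ v w, |x w - x v| = |x' w - x' v|
          + t * |(if w ∈ A then (1:ℝ) else 0) - (if v ∈ A then (1:ℝ) else 0)| := by
        intro v w
        by_cases hv : v ∈ A <;> by_cases hw : w ∈ A
        · rw [hx'in v hv, hx'in w hw, if_pos hv, if_pos hw]
          have h1 : x w - t - (x v - t) = x w - x v := by ring
          rw [h1, sub_self, abs_zero, mul_zero, add_zero]
        · -- v ∈ A, w ∉ A
          rw [hx'in v hv, hx'out w hw, if_neg hw, if_pos hv]
          have h1 : x vp ≤ x v := hxp v ((hmemA v).1 hv)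
          have h2 : x w = m := hxm w (fun h => hw ((hmemA w).2 h))
          rw [h2]
          rw [abs_of_nonpos (by linarith), abs_of_nonpos (by linarith)]
          rw [abs_of_nonpos (by norm_num : (0:ℝ) - 1 ≤ 0)]
          ring
        · -- v ∉ A, w ∈ A
          rw [hx'in w hw, hx'out v hv, if_pos hw, if_neg hv]
          have h1 : x vp ≤ x w := hxp w ((hmemA w).1 hw)
          have h2 : x v = m := hxm v (fun h => hv ((hmemA v).2 h))
          rw [h2]
          rw [abs_of_nonneg (by linarith), abs_of_nonneg (by linarith)]
          rw [abs_of_nonneg (by norm_num : (0:ℝ) ≤ 1 - 0)]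
          ring
        · rw [hx'out v hv, hx'out w hw, if_neg hv, if_neg hw]
          have h2 : x w = m := hxm w (fun h => hw ((hmemA w).2 h))
          have h3 : x v = m := hxm v (fun h => hv ((hmemA v).2 h))
          rw [h2, h3]
          simp
      -- tv decomposition
      have htv : tvNorm G x = tvNorm G x' + t * perim G A := by
        rw [tvNorm, tvNorm, perim, tvNorm]
        have key : ∀ v w, (if G.Adj v w then |x w - x v| else 0)
            = (if G.Adj v w then |x' w - x' v| else 0)
              + t * (if G.Adj v w then
                  |(if w ∈ A then (1:ℝ) else 0) - (if v ∈ A then (1:ℝ) else 0)| else 0) := by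
          intro v w
          by_cases h : G.Adj v w
          · rw [if_pos h, if_pos h, if_pos h]; exact eid v w
          · rw [if_neg h, if_neg h, if_neg h]; ring
        simp only [key, Finset.sum_add_distrib, ← Finset.mul_sum]
        ring
      -- sum decomposition
      have hsum' : ∑ v, x v * u v = ∑ v, x' v * u v + t * ∑ v ∈ A, u v := by
        have key : ∀ v, x v * u v = x' v * u v + t * ((if v ∈ A then (1:ℝ) else 0) * u v) := by
          intro v
          by_cases hv : v ∈ A
          · rw [hx'in v hv, if_pos hv]; ring
          · rw [hx'out v hv, if_neg hv]
            have h2 : x v = m := hxm v (fun h => hv ((hmemA v).2 h))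
            rw [h2]; ring
        simp only [key, Finset.sum_add_distrib, ← Finset.mul_sum]
        rw [sum_ind_mul]
      -- cardinality decrease
      have hcard : (Finset.image x' Finset.univ).card ≤ n := by
        have himg : Finset.image x' Finset.univ = (Finset.image x Finset.univ).image ψ := by
          rw [Finset.image_image]; rfl
        have hlt : ((Finset.image x Finset.univ).image ψ).card
            < (Finset.image x Finset.univ).card := by
          rcases lt_or_eq_of_le (Finset.card_image_le
            (s := Finset.image x Finset.univ) (f := ψ)) with h | h
          · exact h
          · exfalso
            have hinj := Finset.injOn_of_card_image_eq h
            have hmmem : m ∈ Finset.image x Finset.univ := Finset.mem_image_of_mem x (mem_univ vm)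
            have hpmem : x vp ∈ Finset.image x Finset.univ :=
              Finset.mem_image_of_mem x (mem_univ vp)
            have hψm : ψ m = m := by rw [hψ]; dsimp only; rw [if_neg (lt_irrefl m)]
            have hψp : ψ (x vp) = m := by
              rw [hψ]; dsimp only
              rw [if_pos ((hmemA vp).1 hvpA)]
              rw [htdef]; ring
            have heq : m = x vp := hinj hmmem hpmem (by rw [hψm, hψp])
            rw [htdef, ← heq, sub_self] at htpos
            exact lt_irrefl 0 htpos
        rw [himg]
        omega
      have ihx := ih x' hcard
      have hperA := hper A
      calc ∑ v, x v * u v = ∑ v, x' v * u v + t * ∑ v ∈ A, u v := hsum'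
        _ ≤ μ * tvNorm G x' + t * (μ * perim G A) := by
            have := mul_le_mul_of_nonneg_left hperA htpos.le
            linarith
        _ = μ * (tvNorm G x' + t * perim G A) := by ring
        _ = μ * tvNorm G x := by rw [← htv]

end Main

section Exists

variable {V : Type*} [Fintype V] [DecidableEq V] (G : SimpleGraph V) [DecidableRel G.Adj]

lemma exists_subgrad (f : V → ℝ → ℝ) (hconv : ∀ v, ConvexOn ℝ Set.univ (f v))
    (lam : ℝ) (hlam : 0 < lam) (xstar : ℝ)
    (hmin : ∀ d : V → ℝ, -lam * tvNorm G d ≤ ∑ v, (f v (xstar + d v) - f v xstar)) :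
    ∃ u : V → ℝ, (∀ v, IsSubgradientAt (f v) xstar (u v)) ∧ (∑ v, u v = 0) ∧
      ∀ A : Finset V, (∑ v ∈ A, u v) ≤ lam * perim G A := by
  classical
  set h : (V → ℝ) → ℝ := fun d => ∑ v, (f v (xstar + d v) - f v xstar) with hh
  have hfc : ∀ v, Continuous (f v) := fun v =>
    continuousOn_univ.1 ((hconv v).continuousOn isOpen_univ)
  have hcont : Continuous h := by
    apply continuous_finset_sum; intro v _
    exact ((hfc v).comp (continuous_const.add (continuous_apply v))).sub continuous_const
  have hconvh : ∀ (p q : V → ℝ) (a b : ℝ), 0 ≤ a → 0 ≤ b → a + b = 1 →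
      h (fun v => a * p v + b * q v) ≤ a * h p + b * h q := by
    intro p q a b ha hb hab
    rw [hh]; dsimp only
    have key : ∀ v : V, f v (xstar + (a * p v + b * q v)) - f v xstar
        ≤ a * (f v (xstar + p v) - f v xstar) + b * (f v (xstar + q v) - f v xstar) := by
      intro v
      have harg : xstar + (a * p v + b * q v) = a * (xstar + p v) + b * (xstar + q v) := by
        have h1 : a * (xstar + p v) + b * (xstar + q v)
            = (a + b) * xstar + (a * p v + b * q v) := by ring
        rw [h1, hab, one_mul]
      have hc2 := (hconv v).2 (Set.mem_univ (xstar + p v)) (Set.mem_univ (xstar + q v)) ha hb hab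
      simp only [smul_eq_mul] at hc2
      rw [harg]
      have h2 : a * (f v (xstar + p v) - f v xstar) + b * (f v (xstar + q v) - f v xstar)
          = a * f v (xstar + p v) + b * f v (xstar + q v) - (a + b) * f v xstar := by ring
      rw [h2, hab, one_mul]
      linarith [hc2]
    calc ∑ v, (f v (xstar + (a * p v + b * q v)) - f v xstar)
        ≤ ∑ v, (a * (f v (xstar + p v) - f v xstar) + b * (f v (xstar + q v) - f v xstar)) :=
          Finset.sum_le_sum fun v _ => key v
      _ = a * ∑ v, (f v (xstar + p v) - f v xstar)
          + b * ∑ v, (f v (xstar + q v) - f v xstar) := by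
          rw [Finset.sum_add_distrib, ← Finset.mul_sum, ← Finset.mul_sum]
  set S : Set ((V → ℝ) × ℝ) := {p | h p.1 < p.2} with hS
  set T : Set ((V → ℝ) × ℝ) := {p | p.2 ≤ -lam * tvNorm G p.1} with hT
  have hSopen : IsOpen S := isOpen_lt (hcont.comp continuous_fst) continuous_snd
  have hfst : ∀ (p q : (V → ℝ) × ℝ) (a b : ℝ),
      (a • p + b • q).1 = fun v => a * p.1 v + b * q.1 v := by
    intro p q a b; funext v
    simp [smul_eq_mul]
  have hsnd : ∀ (p q : (V → ℝ) × ℝ) (a b : ℝ), (a • p + b • q).2 = a * p.2 + b * q.2 := by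
    intro p q a b; simp [smul_eq_mul]
  have hSconv : Convex ℝ S := by
    intro p hp q hq a b ha hb hab
    simp only [hS, Set.mem_setOf_eq] at hp hq ⊢
    rw [hfst p q a b, hsnd p q a b]
    have hcomb := hconvh p.1 q.1 a b ha hb hab
    rcases ha.eq_or_lt with h0 | h0
    · have hb1 : b = 1 := by linarith
      rw [← h0, hb1] at hcomb ⊢
      simp only [zero_mul, one_mul, zero_add] at hcomb ⊢
      exact lt_of_le_of_lt hcomb hq
    · have h1 : a * h p.1 < a * p.2 := mul_lt_mul_of_pos_left hp h0
      have h2 : b * h q.1 ≤ b * q.2 := mul_le_mul_of_nonneg_left hq.le hb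
      linarith
  have hTconv : Convex ℝ T := by
    intro p hp q hq a b ha hb hab
    simp only [hT, Set.mem_setOf_eq] at hp hq ⊢
    rw [hfst p q a b, hsnd p q a b]
    have h6 := tv_sublinear G p.1 q.1 a b ha hb
    have h7 : lam * tvNorm G (fun v => a * p.1 v + b * q.1 v)
        ≤ lam * (a * tvNorm G p.1 + b * tvNorm G q.1) := mul_le_mul_of_nonneg_left h6 hlam.le
    have h8 : a * p.2 ≤ a * (-lam * tvNorm G p.1) := mul_le_mul_of_nonneg_left hp ha
    have h9 : b * q.2 ≤ b * (-lam * tvNorm G q.1) := mul_le_mul_of_nonneg_left hq hb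
    nlinarith [h7, h8, h9]
  have hdisj : Disjoint S T := by
    rw [Set.disjoint_left]
    intro p hpS hpT
    simp only [hS, hT, Set.mem_setOf_eq] at hpS hpT
    have h9 : h p.1 = ∑ v, (f v (xstar + p.1 v) - f v xstar) := rfl
    have := hmin p.1
    rw [← h9] at this
    linarith
  obtain ⟨F, c, hFS, hFT⟩ := geometric_hahn_banach_open hSconv hSopen hTconv hdisj
  set β := F ((0 : V → ℝ), (1 : ℝ)) with hβdef
  have hF : ∀ (d : V → ℝ) (r : ℝ), F (d, r) = F (d, 0) + r * β := by
    intro d r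
    have hsplit : ((d, r) : (V → ℝ) × ℝ) = (d, (0:ℝ)) + r • ((0 : V → ℝ), (1:ℝ)) := by
      rw [Prod.smul_mk, Prod.mk_add_mk]
      simp
    rw [hsplit, map_add, map_smul, smul_eq_mul, hβdef]
  have hh0 : h 0 = 0 := by rw [hh]; simp
  have htv0 : tvNorm G (0 : V → ℝ) = 0 := tv_const G 0
  have hc0 : c ≤ 0 := by
    have hmem : (((0 : V → ℝ), (0:ℝ)) : (V → ℝ) × ℝ) ∈ T := by
      simp only [hT, Set.mem_setOf_eq, htv0, mul_zero, le_refl]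
    have h2 := hFT _ hmem
    have h3 : F ((0 : V → ℝ), (0:ℝ)) = 0 := by
      have : (((0 : V → ℝ), (0:ℝ)) : (V → ℝ) × ℝ) = 0 := rfl
      rw [this, map_zero]
    rwa [h3] at h2
  have hβc : β < c := by
    have hmem : (((0 : V → ℝ), (1:ℝ)) : (V → ℝ) × ℝ) ∈ S := by
      simp only [hS, Set.mem_setOf_eq, hh0]
      norm_num
    exact hFS _ hmem
  have hcge : 0 ≤ c := by
    by_contra hlt
    push_neg at hlt
    have hβneg : β < 0 := lt_of_lt_of_le hβc hlt.le
    have hr : 0 < c / β := div_pos_of_neg_of_neg hlt hβneg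
    have hmem : (((0 : V → ℝ), c / β) : (V → ℝ) × ℝ) ∈ S := by
      simp only [hS, Set.mem_setOf_eq, hh0]
      exact hr
    have h2 := hFS _ hmem
    rw [hF] at h2
    have h3 : F ((0 : V → ℝ), (0:ℝ)) = 0 := by
      have : (((0 : V → ℝ), (0:ℝ)) : (V → ℝ) × ℝ) = 0 := rfl
      rw [this, map_zero]
    rw [h3, zero_add, div_mul_cancel₀ c hβneg.ne] at h2
    exact lt_irrefl _ h2
  have hc : c = 0 := le_antisymm hc0 hcge
  have hβ : β < 0 := by rw [hc] at hβc; exact hβc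
  set L : (V → ℝ) →L[ℝ] ℝ := F.comp (ContinuousLinearMap.inl ℝ (V → ℝ) ℝ) with hLdef
  have hLd : ∀ d : V → ℝ, L d = F (d, 0) := fun d => rfl
  set u : V → ℝ := fun v => L (fun j => if v = j then 1 else 0) / (-β) with hu
  have hrep : ∀ d : V → ℝ, ∑ v, d v * u v = L d / (-β) := by
    intro d
    have h1 : L d = ∑ v, d v * L (fun j => if v = j then 1 else 0) := by
      conv_lhs => rw [pi_eq_sum_univ d]
      rw [map_sum]
      apply Finset.sum_congr rfl; intro v _
      rw [map_smul, smul_eq_mul]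
    rw [h1, Finset.sum_div]
    apply Finset.sum_congr rfl; intro v _
    rw [hu]; dsimp only; rw [mul_div_assoc]
  have hle : ∀ d : V → ℝ, ∑ v, d v * u v ≤ h d := by
    intro d
    by_contra hlt
    push_neg at hlt
    have hmem : ((d, ∑ v, d v * u v) : (V → ℝ) × ℝ) ∈ S := by
      simp only [hS, Set.mem_setOf_eq]; exact hlt
    have h2 := hFS _ hmem
    rw [hc, hF, ← hLd d, hrep d] at h2
    have h3 : L d / (-β) * β = - L d := by rw [div_neg, neg_mul, div_mul_cancel₀ _ (ne_of_lt hβ)]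
    linarith
  have hge : ∀ d : V → ℝ, -lam * tvNorm G d ≤ ∑ v, d v * u v := by
    intro d
    have hmem : ((d, -lam * tvNorm G d) : (V → ℝ) × ℝ) ∈ T := by
      simp only [hT, Set.mem_setOf_eq, le_refl]
    have h2 := hFT _ hmem
    rw [hc, hF, ← hLd d] at h2
    rw [hrep d, le_div_iff₀ (show (0:ℝ) < -β by linarith)]
    nlinarith [h2]
  refine ⟨u, ?_, ?_, ?_⟩
  · intro v y0
    set d : V → ℝ := fun w => if w = v then y0 - xstar else 0 with hd
    have h1 := hle d
    have h2 : ∑ w, d w * u w = (y0 - xstar) * u v := by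
      have hpt : ∀ w, d w * u w = if w = v then (y0 - xstar) * u v else 0 := by
        intro w; rw [hd]; dsimp only; by_cases hw : w = v
        · rw [if_pos hw, if_pos hw, hw]
        · rw [if_neg hw, if_neg hw, zero_mul]
      rw [Finset.sum_congr rfl fun w _ => hpt w, Finset.sum_ite_eq' Finset.univ v]
      rw [if_pos (Finset.mem_univ v)]
    have h3 : h d = f v y0 - f v xstar := by
      rw [hh]; dsimp only
      have hpt : ∀ w, f w (xstar + d w) - f w xstar
          = if w = v then f v y0 - f v xstar else 0 := by
        intro w; rw [hd]; dsimp only; by_cases hw : w = v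
        · rw [if_pos hw, if_pos hw, hw]
          have harg : xstar + (y0 - xstar) = y0 := by ring
          rw [harg]
        · rw [if_neg hw, if_neg hw, add_zero, sub_self]
      rw [Finset.sum_congr rfl fun w _ => hpt w, Finset.sum_ite_eq' Finset.univ v]
      rw [if_pos (Finset.mem_univ v)]
    rw [h2, h3] at h1
    have h4 := mul_comm (u v) (y0 - xstar)
    show f v xstar + u v * (y0 - xstar) ≤ f v y0
    linarith
  · have ha := hge (fun _ => (1:ℝ))
    have hb := hge (fun _ => (-1:ℝ))
    rw [tv_const] at ha hb
    have ha' : 0 ≤ ∑ v, u v := by simpa using ha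
    have hb' : ∑ v, u v ≤ 0 := by
      have : ∑ v, (-1:ℝ) * u v = -∑ v, u v := by
        simp [neg_mul, Finset.sum_neg_distrib]
      rw [this] at hb
      simp only [mul_zero] at hb
      linarith
    linarith
  · intro A
    have hA := hge (fun v => if v ∈ A then (-1:ℝ) else 0)
    have htveq : tvNorm G (fun v => if v ∈ A then (-1:ℝ) else 0) = perim G A := by
      rw [perim]; apply tv_congr
      intro v w
      by_cases hv : v ∈ A <;> by_cases hw : w ∈ A <;> simp [hv, hw]
    have hsum2 : ∑ v, (if v ∈ A then (-1:ℝ) else 0) * u v = -∑ v ∈ A, u v := by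
      have hpt : ∀ v, (if v ∈ A then (-1:ℝ) else 0) * u v
          = -((if v ∈ A then (1:ℝ) else 0) * u v) := by
        intro v; split <;> ring
      simp only [hpt, Finset.sum_neg_distrib, sum_ind_mul]
    rw [htveq, hsum2] at hA
    linarith

end Exists

/-- Characterization of consensus minimizers of the TV-regularized problem:
`x* 1` minimizes `F + λ‖·‖_TV` iff some subgradient vector `u ∈ ∂F(x* 1)` is
zero-mean with `‖u‖_* ≤ λ` iff such a `u` satisfies `∑_A u ≤ λ per(A)` for all
`A ⊆ V`; and each of these implies that `x*` minimizes `∑_v f_v`. -/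
theorem consensus_minimizer_characterization {V : Type*} [Fintype V] [DecidableEq V]
    (G : SimpleGraph V) [DecidableRel G.Adj] (hG : G.Connected)
    (f : V → ℝ → ℝ) (hconv : ∀ v, ConvexOn ℝ Set.univ (f v))
    (lam : ℝ) (hlam : 0 < lam) (xstar : ℝ) :
    ((∀ y : V → ℝ,
        (∑ v, f v xstar) + lam * tvNorm G (fun _ => xstar)
          ≤ (∑ v, f v (y v)) + lam * tvNorm G y)
      ↔ (∃ u : V → ℝ, (∀ v, IsSubgradientAt (f v) xstar (u v)) ∧
          (∑ v, u v = 0) ∧ dualNorm G u ≤ lam))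
    ∧
    ((∃ u : V → ℝ, (∀ v, IsSubgradientAt (f v) xstar (u v)) ∧
        (∑ v, u v = 0) ∧ dualNorm G u ≤ lam)
      ↔ (∃ u : V → ℝ, (∀ v, IsSubgradientAt (f v) xstar (u v)) ∧
          (∑ v, u v = 0) ∧ ∀ A : Finset V, (∑ v ∈ A, u v) ≤ lam * perim G A))
    ∧
    ((∀ y : V → ℝ,
        (∑ v, f v xstar) + lam * tvNorm G (fun _ => xstar)
          ≤ (∑ v, f v (y v)) + lam * tvNorm G y)
      → ∀ y : ℝ, (∑ v, f v xstar) ≤ ∑ v, f v y) := by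
  classical
  have htvc : tvNorm G (fun _ => xstar) = 0 := tv_const G xstar
  -- (per) implies (min)
  have per_to_min : ∀ u : V → ℝ, (∀ v, IsSubgradientAt (f v) xstar (u v)) →
      (∑ v, u v = 0) → (∀ A : Finset V, ∑ v ∈ A, u v ≤ lam * perim G A) →
      ∀ y : V → ℝ, (∑ v, f v xstar) + lam * tvNorm G (fun _ => xstar)
        ≤ (∑ v, f v (y v)) + lam * tvNorm G y := by
    intro u hsub hzero hper y
    rw [htvc, mul_zero, add_zero]
    have h2 : ∑ v, (f v xstar + u v * (y v - xstar)) ≤ ∑ v, f v (y v) :=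
      Finset.sum_le_sum fun v _ => hsub v (y v)
    have h3 : ∑ v, (f v xstar + u v * (y v - xstar))
        = ∑ v, f v xstar + (∑ v, y v * u v - xstar * ∑ v, u v) := by
      rw [Finset.sum_add_distrib]
      congr 1
      calc ∑ v, u v * (y v - xstar) = ∑ v, (y v * u v - xstar * u v) :=
            Finset.sum_congr rfl fun v _ => by ring
        _ = ∑ v, y v * u v - ∑ v, xstar * u v := Finset.sum_sub_distrib _ _
        _ = ∑ v, y v * u v - xstar * ∑ v, u v := by rw [Finset.mul_sum]
    rw [hzero, mul_zero, sub_zero] at h3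
    rw [h3] at h2
    have h4 := layer_cake G u lam hzero hper
      (Finset.image (fun v => -y v) Finset.univ).card (fun v => -y v) le_rfl
    rw [tv_neg] at h4
    have h5 : ∑ v, -y v * u v = -∑ v, y v * u v := by
      simp [neg_mul, Finset.sum_neg_distrib]
    rw [h5] at h4
    linarith
  -- (min) implies (per)
  have min_to_per : (∀ y : V → ℝ, (∑ v, f v xstar) + lam * tvNorm G (fun _ => xstar)
        ≤ (∑ v, f v (y v)) + lam * tvNorm G y) →
      ∃ u : V → ℝ, (∀ v, IsSubgradientAt (f v) xstar (u v)) ∧ (∑ v, u v = 0) ∧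
        ∀ A : Finset V, (∑ v ∈ A, u v) ≤ lam * perim G A := by
    intro hminy
    apply exists_subgrad G f hconv lam hlam xstar
    intro d
    have h1 := hminy (fun v => xstar + d v)
    rw [htvc, mul_zero, add_zero] at h1
    have h2 : tvNorm G (fun v => xstar + d v) = tvNorm G d := by
      have he : (fun v => xstar + d v) = fun v => d v + xstar := by funext v; ring
      rw [he, tv_add_const]
    rw [h2] at h1
    have h3 : ∑ v, (f v (xstar + d v) - f v xstar)
        = ∑ v, f v (xstar + d v) - ∑ v, f v xstar := Finset.sum_sub_distrib _ _
    linarith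
  -- (per) implies (dual)
  have per_to_dual : ∀ u : V → ℝ, (∑ v, u v = 0) →
      (∀ A : Finset V, ∑ v ∈ A, u v ≤ lam * perim G A) → dualNorm G u ≤ lam := by
    intro u hzero hper
    rw [dualNorm]
    apply Real.sSup_le _ hlam.le
    rintro r ⟨x, hx0, hxtv, rfl⟩
    have h1 := layer_cake G u lam hzero hper (Finset.image x Finset.univ).card x le_rfl
    calc ∑ v, x v * u v ≤ lam * tvNorm G x := h1
      _ ≤ lam * 1 := mul_le_mul_of_nonneg_left hxtv hlam.le
      _ = lam := mul_one lam
  -- (dual) implies (per)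
  have dual_to_per : ∀ u : V → ℝ, (∑ v, u v = 0) → dualNorm G u ≤ lam →
      ∀ A : Finset V, (∑ v ∈ A, u v) ≤ lam * perim G A := by
    intro u hzero hdual A
    by_cases hAe : A = ∅
    · subst hAe
      rw [perim_empty, mul_zero]
      simp
    by_cases hAu : A = Finset.univ
    · subst hAu
      rw [perim_univ, mul_zero]
      exact le_of_eq hzero
    · have hAne : A.Nonempty := Finset.nonempty_iff_ne_empty.2 hAe
      have hp2 : 1/2 ≤ perim G A := perim_ge_half G hG A hAne hAu
      have hppos : 0 < perim G A := by linarith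
      set K := ∑ v, |u v| with hK
      have hKnn : 0 ≤ K := Finset.sum_nonneg fun v _ => abs_nonneg _
      have hperK : ∀ B : Finset V, ∑ v ∈ B, u v ≤ (2*K) * perim G B := by
        intro B
        by_cases hBe : B = ∅
        · subst hBe; simp [perim_empty]
        by_cases hBu : B = Finset.univ
        · subst hBu; rw [perim_univ, mul_zero]; exact le_of_eq hzero
        · have hBp : 1/2 ≤ perim G B :=
            perim_ge_half G hG B (Finset.nonempty_iff_ne_empty.2 hBe) hBu
          have h1 : ∑ v ∈ B, u v ≤ ∑ v ∈ B, |u v| :=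
            Finset.sum_le_sum fun v _ => le_abs_self _
          have h2 : ∑ v ∈ B, |u v| ≤ K :=
            Finset.sum_le_sum_of_subset_of_nonneg (Finset.subset_univ B)
              (fun v _ _ => abs_nonneg _)
          nlinarith [hBp, hKnn]
      have hbdd : BddAbove {r | ∃ x : V → ℝ,
          (∑ v, x v = 0) ∧ tvNorm G x ≤ 1 ∧ r = ∑ v, x v * u v} := by
        refine ⟨2*K, ?_⟩
        rintro r ⟨x, hx0, hxtv, rfl⟩
        have h1 := layer_cake G u (2*K) hzero hperK (Finset.image x Finset.univ).card x le_rfl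
        nlinarith [tv_nonneg G x]
      have hVne : Nonempty V := ⟨hAne.choose⟩
      have hn : (0:ℝ) < (Fintype.card V : ℝ) := by
        exact_mod_cast Fintype.card_pos_iff.2 hVne
      set n : ℝ := (Fintype.card V : ℝ) with hndef
      set p := perim G A with hpdef
      set c : ℝ := (A.card : ℝ) / n with hcdef
      set x : V → ℝ := fun v => ((if v ∈ A then (1:ℝ) else 0) - c) / p with hx
      have hind : ∑ v, (if v ∈ A then (1:ℝ) else 0) = (A.card : ℝ) := by
        rw [Finset.sum_ite_mem, Finset.univ_inter, Finset.sum_const, nsmul_eq_mul, mul_one]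
      have hx0 : ∑ v, x v = 0 := by
        have h1 : ∑ v, x v = (∑ v, ((if v ∈ A then (1:ℝ) else 0) - c)) / p := by
          rw [Finset.sum_div]
        have h2 : ∑ v, ((if v ∈ A then (1:ℝ) else 0) - c) = (A.card : ℝ) - n * c := by
          rw [Finset.sum_sub_distrib, hind, Finset.sum_const, Finset.card_univ, nsmul_eq_mul]
        have h3 : (A.card : ℝ) - n * c = 0 := by
          rw [hcdef]
          field_simp
          ring
        rw [h1, h2, h3, zero_div]
      have hxtv : tvNorm G x ≤ 1 := by
        have h1 : tvNorm G x
            = p⁻¹ * tvNorm G (fun v => (if v ∈ A then (1:ℝ) else 0) + -c) := by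
          rw [← tv_smul G (fun v => (if v ∈ A then (1:ℝ) else 0) + -c) p⁻¹
            (inv_nonneg.2 hppos.le)]
          congr 1
          funext v
          rw [hx]
          dsimp only
          rw [sub_eq_add_neg, div_eq_inv_mul]
        have h2 : tvNorm G (fun v => (if v ∈ A then (1:ℝ) else 0) + -c) = perim G A := by
          rw [perim]
          apply tv_congr
          intro v w
          rw [add_sub_add_right_eq_sub]
        rw [h1, h2, ← hpdef, inv_mul_cancel₀ hppos.ne']
      have hxu : ∑ v, x v * u v = (∑ v ∈ A, u v) / p := by
        have h1 : ∀ v, x v * u v = ((if v ∈ A then (1:ℝ) else 0) * u v - c * u v) / p := by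
          intro v; rw [hx]; dsimp only; ring
        rw [Finset.sum_congr rfl fun v _ => h1 v, ← Finset.sum_div, Finset.sum_sub_distrib,
          sum_ind_mul, ← Finset.mul_sum, hzero, mul_zero, sub_zero]
      have hmem : (∑ v ∈ A, u v) / p ∈ {r | ∃ x : V → ℝ,
          (∑ v, x v = 0) ∧ tvNorm G x ≤ 1 ∧ r = ∑ v, x v * u v} :=
        ⟨x, hx0, hxtv, hxu.symm⟩
      have h5 : (∑ v ∈ A, u v) / p ≤ dualNorm G u := le_csSup hbdd hmem
      have h6 : (∑ v ∈ A, u v) / p ≤ lam := le_trans h5 hdual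
      rw [div_le_iff₀ hppos] at h6
      calc ∑ v ∈ A, u v ≤ lam * p := h6
        _ = lam * perim G A := by rw [hpdef]
  refine ⟨⟨fun hmin => ?_, fun hdual => ?_⟩, ⟨fun hdual => ?_, fun hper => ?_⟩, fun hmin y => ?_⟩
  · obtain ⟨u, hs, hz, hp⟩ := min_to_per hmin
    exact ⟨u, hs, hz, per_to_dual u hz hp⟩
  · obtain ⟨u, hs, hz, hd⟩ := hdual
    exact per_to_min u hs hz (dual_to_per u hz hd)
  · obtain ⟨u, hs, hz, hd⟩ := hdual
    exact ⟨u, hs, hz, dual_to_per u hz hd⟩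
  · obtain ⟨u, hs, hz, hp⟩ := hper
    exact ⟨u, hs, hz, per_to_dual u hz hp⟩
  · have h1 := hmin (fun _ => y)
    rw [htvc, tv_const] at h1
    simpa using h1
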